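/- For every bipartite matrix ρ on ℂ^d ⊗ ℂ^d, the trace norm of the partial transpose of the realigned matrix equals the trace norm of the partial transpose of ρ: ‖R(ρ)^{T₂}‖_tr = ‖ρ^{T₂}‖_tr. -/

import Mathlib

open Matrix Kronecker ComplexOrder

/-- Trace norm `‖X‖_tr = Tr √(X Xᴴ)`. -/
noncomputable def traceNorm {m n : Type*} [Fintype m] [Fintype n] [DecidableEq m]
    (X : Matrix m n ℂ) : ℝ :=
  ((((Matrix.posSemidef_self_mul_conjTranspose X).1.eigenvectorUnitary : Matrix m m ℂ) *
      diagonal (fun i => (((Matrix.posSemidef_self_mul_conjTranspose X).1.eigenvalues i).sqrt : ℂ)) *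
      (star (Matrix.posSemidef_self_mul_conjTranspose X).1.eigenvectorUnitary : Matrix m m ℂ)).trace).re

/-- A density matrix: positive semidefinite with trace 1. -/
def IsDensityMatrix {n : Type*} [Fintype n] (ρ : Matrix n n ℂ) : Prop :=
  ρ.PosSemidef ∧ ρ.trace = 1

/-- The realignment map: `R(ρ)_{(i,j),(k,l)} = ρ_{(i,k),(j,l)}`. -/
def realign {dA dB : ℕ} (ρ : Matrix (Fin dA × Fin dB) (Fin dA × Fin dB) ℂ) :
    Matrix (Fin dA × Fin dA) (Fin dB × Fin dB) ℂ :=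
  fun p q => ρ (p.1, q.1) (p.2, q.2)

/-- Partial transpose on the second subsystem: `(ρ^{T₂})_{(i,k),(j,l)} = ρ_{(i,l),(j,k)}`. -/
def ptranspose2 {d : ℕ} (ρ : Matrix (Fin d × Fin d) (Fin d × Fin d) ℂ) :
    Matrix (Fin d × Fin d) (Fin d × Fin d) ℂ :=
  fun p q => ρ (p.1, q.2) (q.1, p.2)

/-- The swap (exchange) operator `F_{(i,k),(j,l)} = δ_{il} δ_{kj}`. -/
def swapOp (d : ℕ) : Matrix (Fin d × Fin d) (Fin d × Fin d) ℂ :=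
  fun p q => if p.1 = q.2 ∧ p.2 = q.1 then 1 else 0

/-- The unnormalized maximally entangled projector `(|Ω⟩⟨Ω|)_{(i,k),(j,l)} = δ_{ik} δ_{jl}`. -/
def omegaProj (d : ℕ) : Matrix (Fin d × Fin d) (Fin d × Fin d) ℂ :=
  fun p q => if p.1 = p.2 ∧ q.1 = q.2 then 1 else 0

/-- Separability: `ρ` is a finite convex combination of products of density matrices. -/
def IsSeparableState {dA dB : ℕ} (ρ : Matrix (Fin dA × Fin dB) (Fin dA × Fin dB) ℂ) : Prop :=
  ∃ (m : ℕ) (p : Fin m → ℝ) (σ : Fin m → Matrix (Fin dA) (Fin dA) ℂ)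
    (τ : Fin m → Matrix (Fin dB) (Fin dB) ℂ),
    (∀ k, 0 ≤ p k) ∧ (∑ k, p k = 1) ∧ (∀ k, IsDensityMatrix (σ k)) ∧
    (∀ k, IsDensityMatrix (τ k)) ∧ ρ = ∑ k, (p k : ℂ) • (σ k ⊗ₖ τ k)

/-- `‖R(ρ)^{T₂}‖_tr = ‖ρ^{T₂}‖_tr`. -/
theorem traceNorm_ptranspose_realign {d : ℕ}
    (ρ : Matrix (Fin d × Fin d) (Fin d × Fin d) ℂ) :
    traceNorm (ptranspose2 (realign ρ)) = traceNorm (ptranspose2 ρ) := by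
  have key : ptranspose2 (realign ρ) * (ptranspose2 (realign ρ))ᴴ =
      ptranspose2 ρ * (ptranspose2 ρ)ᴴ := by
    ext p q
    simp only [Matrix.mul_apply, Matrix.conjTranspose_apply]
    refine Fintype.sum_equiv (Equiv.prodComm (Fin d) (Fin d)) _ _ fun r => ?_
    rfl
  have gen : ∀ (M N : Matrix (Fin d × Fin d) (Fin d × Fin d) ℂ)
      (hM : M.PosSemidef) (hN : N.PosSemidef), M = N →
      ((hM.1.eigenvectorUnitary : Matrix _ _ ℂ) * diagonal (fun i => ((hM.1.eigenvalues i).sqrt : ℂ)) *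
        (star hM.1.eigenvectorUnitary : Matrix _ _ ℂ)) =
      ((hN.1.eigenvectorUnitary : Matrix _ _ ℂ) * diagonal (fun i => ((hN.1.eigenvalues i).sqrt : ℂ)) *
        (star hN.1.eigenvectorUnitary : Matrix _ _ ℂ)) := by
    rintro M N hM hN rfl; rfl
  have hs := gen _ _ (Matrix.posSemidef_self_mul_conjTranspose (ptranspose2 (realign ρ)))
    (Matrix.posSemidef_self_mul_conjTranspose (ptranspose2 ρ)) key
  simp only [traceNorm, hs]
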